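/- Suppose φ^ν : ℝⁿ → ℝ ∪ {±∞} epi-converge to a proper function φ, meaning: (a) for every x and every x^ν → x, liminf φ^ν(x^ν) ≥ φ(x), and (b) for every x there exist x^ν → x with limsup φ^ν(x^ν) ≤ φ(x). If x^ν is a sequence with φ^ν(x^ν) ≤ inf φ^ν + ε^ν where ε^ν → 0, inf φ^ν > -∞ for all ν, and x^ν converges to a point x̄ along a subsequence, then x̄ is a minimizer of φ, i.e., φ(x̄) ≤ φ(x) for all x. -/

import Mathlib

open Filter Topology

theorem stmt_4 {n : ℕ} (φν : ℕ → (Fin n → ℝ) → EReal) (φ : (Fin n → ℝ) → EReal)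
    (hproper : (∀ x, φ x ≠ ⊥) ∧ ∃ x, φ x ≠ ⊤)
    (hliminf : ∀ (x : Fin n → ℝ) (xs : ℕ → Fin n → ℝ), Tendsto xs atTop (𝓝 x) →
      φ x ≤ liminf (fun ν => φν ν (xs ν)) atTop)
    (hlimsup : ∀ x : Fin n → ℝ, ∃ xs : ℕ → Fin n → ℝ, Tendsto xs atTop (𝓝 x) ∧
      limsup (fun ν => φν ν (xs ν)) atTop ≤ φ x)
    (xν : ℕ → Fin n → ℝ) (εν : ℕ → ℝ) (hε : Tendsto εν atTop (𝓝 0))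
    (hbdd : ∀ ν, (⨅ x, φν ν x) ≠ ⊥)
    (hnear : ∀ ν, φν ν (xν ν) ≤ (⨅ x, φν ν x) + ((εν ν : ℝ) : EReal))
    (xbar : Fin n → ℝ) (σ : ℕ → ℕ) (hσ : StrictMono σ)
    (hcluster : Tendsto (fun k => xν (σ k)) atTop (𝓝 xbar)) :
    ∀ x, φ xbar ≤ φ x := by
  classical
  intro x
  obtain ⟨xs, hxs, hxsls⟩ := hlimsup x
  -- the modified sequence that follows xν on the range of σ
  set ys : ℕ → Fin n → ℝ := fun ν => if ν ∈ Set.range σ then xν ν else xbar with hys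
  have hσtop : Tendsto σ atTop atTop := hσ.tendsto_atTop
  -- ys tends to xbar
  have hys_tendsto : Tendsto ys atTop (𝓝 xbar) := by
    rw [tendsto_def]
    intro U hU
    obtain ⟨K, hK⟩ := eventually_atTop.1 (hcluster.eventually (eventually_mem_nhds_iff.2 hU |>.mono fun y hy => mem_of_mem_nhds hy))
    rw [mem_atTop_sets]
    refine ⟨σ K, fun ν hν => ?_⟩
    simp only [Set.mem_preimage, hys]
    by_cases hr : ν ∈ Set.range σ
    · obtain ⟨k, rfl⟩ := hr
      simpa [Set.mem_range, exists_apply_eq_apply] using hK k (hσ.le_iff_le.1 hν)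
    · simp only [hr, if_false]
      exact mem_of_mem_nhds hU
  -- epi-convergence lower bound at xbar
  have h1 : φ xbar ≤ liminf (fun ν => φν ν (ys ν)) atTop := hliminf xbar ys hys_tendsto
  -- pass to the subsequence
  have hmapσ : map σ atTop ≤ atTop := hσtop
  have h2 : liminf (fun ν => φν ν (ys ν)) atTop ≤
      liminf (fun k => φν (σ k) (xν (σ k))) atTop := by
    have := liminf_le_liminf_of_le (u := fun ν => φν ν (ys ν)) hmapσ
      (by isBoundedDefault) (by isBoundedDefault)
    rw [← liminf_comp] at this
    refine this.trans_eq ?_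
    congr 1
    funext k
    simp [hys, Function.comp, Set.mem_range]
  -- near-minimality comparison with the recovery sequence
  have h3 : ∀ k, φν (σ k) (xν (σ k)) ≤ φν (σ k) (xs (σ k)) + ((εν (σ k) : ℝ) : EReal) := by
    intro k
    exact (hnear (σ k)).trans (add_le_add_left (iInf_le _ _) _)
  have h4 : liminf (fun k => φν (σ k) (xν (σ k))) atTop ≤
      liminf (fun k => φν (σ k) (xs (σ k)) + ((εν (σ k) : ℝ) : EReal)) atTop :=
    liminf_le_liminf (Eventually.of_forall h3)
  -- the error term tends to 0
  have hεσ : Tendsto (fun k => ((εν (σ k) : ℝ) : EReal)) atTop (𝓝 (0 : EReal)) := by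
    have : Tendsto (fun k => εν (σ k)) atTop (𝓝 0) := hε.comp hσtop
    exact (EReal.tendsto_coe.2 this)
  have hεliminf : liminf (fun k => ((εν (σ k) : ℝ) : EReal)) atTop = (0 : EReal) :=
    hεσ.liminf_eq
  -- split the liminf of the sum
  have h5 : liminf (fun k => φν (σ k) (xs (σ k)) + ((εν (σ k) : ℝ) : EReal)) atTop ≤
      limsup (fun k => φν (σ k) (xs (σ k))) atTop := by
    have := EReal.liminf_add_le (f := atTop) (u := fun k => φν (σ k) (xs (σ k)))
      (v := fun k => ((εν (σ k) : ℝ) : EReal))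
      (by rw [hεliminf]; exact Or.inr (by simp))
      (by rw [hεliminf]; exact Or.inr (by simp))
    rw [hεliminf, add_zero] at this
    exact this
  -- limsup along the subsequence is at most the full limsup
  have h6 : limsup (fun k => φν (σ k) (xs (σ k))) atTop ≤
      limsup (fun ν => φν ν (xs ν)) atTop := by
    have := limsup_le_limsup_of_le (u := fun ν => φν ν (xs ν)) hmapσ
      (by isBoundedDefault) (by isBoundedDefault)
    rw [← limsup_comp] at this
    exact this
  exact h1.trans (h2.trans (h4.trans (h5.trans (h6.trans hxsls))))
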